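/- Let σ₀, ψ₀ ∈ ℝ satisfy 2σ₀² + ψ₀² = 2/3, and let the potential be V ≡ 0. Then on (0, ∞) the functions θ(t) = 1/t, σ(t) = σ₀/t, φ(t) = ψ₀ ln t + c (any constant c), ψ(t) = ψ₀/t satisfy the Einstein–Klein–Gordon evolution system and the Bianchi I constraint σ² + V(φ) + ψ²/2 − θ²/3 = 0 identically. Likewise, θ(t) = 2/t, σ(t) = −1/(√3 t), φ constant, ψ(t) = 0 satisfy the evolution system with V ≡ 0. (These are the exact solutions corresponding to the family Σ and to the critical point P₁, respectively.) -/

import Mathlib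

/-- With vanishing potential `V ≡ 0` (units `8πG = 1`):
(a) whenever `2σ₀² + ψ₀² = 2/3`, the functions `θ(t) = 1/t`, `σ(t) = σ₀/t`,
`φ(t) = ψ₀ ln t + c`, `ψ(t) = ψ₀/t` on `(0, ∞)` satisfy the
Einstein–Klein–Gordon evolution system and the Bianchi I constraint
`σ² + V(φ) + ψ²/2 − θ²/3 = 0` identically (exact solutions corresponding to
the family `Σ`); (b) likewise `θ(t) = 2/t`, `σ(t) = −1/(√3 t)`, `φ` constant,
`ψ(t) = 0` satisfy the evolution system (the exact solution corresponding to
the critical point `P₁`). -/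
theorem exact_solutions_Sigma_and_P1
    (V : ℝ → ℝ) (hV : ∀ x, V x = 0)
    (σ₀ ψ₀ c : ℝ) (h₀ : 2 * σ₀ ^ 2 + ψ₀ ^ 2 = 2 / 3)
    (θ σ φ ψ : ℝ → ℝ)
    (hθ : ∀ t, θ t = 1 / t) (hσ : ∀ t, σ t = σ₀ / t)
    (hφ : ∀ t, φ t = ψ₀ * Real.log t + c) (hψ : ∀ t, ψ t = ψ₀ / t)
    (c₁ : ℝ) (θ₁ σ₁ φ₁ ψ₁ : ℝ → ℝ)
    (hθ₁ : ∀ t, θ₁ t = 2 / t) (hσ₁ : ∀ t, σ₁ t = -1 / (Real.sqrt 3 * t))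
    (hφ₁ : ∀ t, φ₁ t = c₁) (hψ₁ : ∀ t, ψ₁ t = 0) :
    (∀ t ∈ Set.Ioi (0 : ℝ),
      HasDerivAt θ
        (-(1 / 3) * θ t ^ 2 - 2 * σ t ^ 2 + V (φ t) - ψ t ^ 2) t ∧
      HasDerivAt σ
        (-θ t ^ 2 / (3 * Real.sqrt 3) - θ t * σ t + σ t ^ 2 / Real.sqrt 3
          + (1 / Real.sqrt 3) * (V (φ t) + ψ t ^ 2 / 2)) t ∧
      HasDerivAt φ (ψ t) t ∧
      HasDerivAt ψ (-θ t * ψ t - deriv V (φ t)) t ∧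
      σ t ^ 2 + V (φ t) + ψ t ^ 2 / 2 - θ t ^ 2 / 3 = 0) ∧
    (∀ t ∈ Set.Ioi (0 : ℝ),
      HasDerivAt θ₁
        (-(1 / 3) * θ₁ t ^ 2 - 2 * σ₁ t ^ 2 + V (φ₁ t) - ψ₁ t ^ 2) t ∧
      HasDerivAt σ₁
        (-θ₁ t ^ 2 / (3 * Real.sqrt 3) - θ₁ t * σ₁ t + σ₁ t ^ 2 / Real.sqrt 3
          + (1 / Real.sqrt 3) * (V (φ₁ t) + ψ₁ t ^ 2 / 2)) t ∧
      HasDerivAt φ₁ (ψ₁ t) t ∧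
      HasDerivAt ψ₁ (-θ₁ t * ψ₁ t - deriv V (φ₁ t)) t) := by
  have hVf : V = fun _ => 0 := funext hV
  subst hVf
  have hdV : deriv (fun _ : ℝ => (0:ℝ)) = fun _ => 0 := by
    funext x; simp
  have hθf : θ = fun t => 1 / t := funext hθ
  have hσf : σ = fun t => σ₀ / t := funext hσ
  have hφf : φ = fun t => ψ₀ * Real.log t + c := funext hφ
  have hψf : ψ = fun t => ψ₀ / t := funext hψ
  have hθ₁f : θ₁ = fun t => 2 / t := funext hθ₁
  have hσ₁f : σ₁ = fun t => -1 / (Real.sqrt 3 * t) := funext hσ₁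
  have hφ₁f : φ₁ = fun _ => c₁ := funext hφ₁
  have hψ₁f : ψ₁ = fun _ => 0 := funext hψ₁
  subst hθf hσf hφf hψf hθ₁f hσ₁f hφ₁f hψ₁f
  have s3 : Real.sqrt 3 > 0 := Real.sqrt_pos.mpr (by norm_num)
  have s3sq : Real.sqrt 3 * Real.sqrt 3 = 3 := Real.mul_self_sqrt (by norm_num)
  constructor
  · intro t ht
    have ht0 : (0:ℝ) < t := ht
    have htne : t ≠ 0 := ht0.ne'
    have hinv : ∀ a : ℝ, HasDerivAt (fun t : ℝ => a / t) (-a / t ^ 2) t := by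
      intro a
      have := (hasDerivAt_inv htne).const_mul a
      simpa [div_eq_mul_inv, neg_div, mul_comm] using this
    refine ⟨?_, ?_, ?_, ?_, ?_⟩
    · have := hinv 1
      convert this using 1
      field_simp
      linear_combination (-3) * h₀
    · have := hinv σ₀
      convert this using 1
      field_simp
      linear_combination 3 * h₀
    · have h1 : HasDerivAt (fun t : ℝ => ψ₀ * Real.log t + c) (ψ₀ * t⁻¹) t :=
        ((Real.hasDerivAt_log htne).const_mul ψ₀).add_const c
      simpa [mul_one_div, div_eq_mul_inv] using h1
    · have := hinv ψ₀
      convert this using 1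
      rw [hdV]
      field_simp
      ring
    · field_simp
      linear_combination 3 * h₀
  · intro t ht
    have ht0 : (0:ℝ) < t := ht
    have htne : t ≠ 0 := ht0.ne'
    have hinv : ∀ a : ℝ, HasDerivAt (fun t : ℝ => a / t) (-a / t ^ 2) t := by
      intro a
      have := (hasDerivAt_inv htne).const_mul a
      simpa [div_eq_mul_inv, neg_div, mul_comm] using this
    refine ⟨?_, ?_, ?_, ?_⟩
    · have := hinv 2
      convert this using 1
      field_simp
      linear_combination 2 * s3sq
    · have h1 : HasDerivAt (fun t : ℝ => (-1 / Real.sqrt 3) / t)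
        (-(-1 / Real.sqrt 3) / t ^ 2) t := hinv _
      have h2 : (fun t : ℝ => (-1 / Real.sqrt 3) / t)
          = fun t : ℝ => -1 / (Real.sqrt 3 * t) := by
        funext x; field_simp
      rw [h2] at h1
      convert h1 using 1
      field_simp
      linear_combination (-2) * s3sq
    · simpa using hasDerivAt_const t c₁
    · rw [hdV]; simpa using hasDerivAt_const t (0:ℝ)
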